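/- arXiv:2108.00565 — 2 statements merged into one kernel-verified Lean document; each statement's English description precedes it below -/
import Mathlib

section
/- Let K be an AEC, λ ≥ LS(K) a cardinal such that K has the λ-amalgamation property, and κ a cardinal with κ ≥ λ. Then (gS¹_λ)^κ = gS^κ_λ. -/
universe u

open Cardinal Set FirstOrder

namespace AECStmt

variable (L : FirstOrder.Language.{u, u})

/-- A bundled `L`-structure in universe `u`. -/
structure Mdl : Type (u + 1) where
  Carrier : Type u
  struc : L.Structure Carrier

attribute [instance] Mdl.struc

/-- An abstract elementary class in the language `L`, presented by its class of models
together with its class of strong (`K`-)embeddings.  `M ≤_K N` corresponds to the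
inclusion embedding being strong. -/
structure AEC : Type (u + 1) where
  Mem : Mdl L → Prop
  IsStrong : ∀ {M N : Mdl L}, (M.Carrier ↪[L] N.Carrier) → Prop
  LS : Cardinal.{u}
  /-- the Löwenheim–Skolem number is at least `|L(K)| + ℵ₀` -/
  LS_ge : L.card + ℵ₀ ≤ LS
  strong_mem_left : ∀ {M N : Mdl L} (f : M.Carrier ↪[L] N.Carrier), IsStrong f → Mem M
  strong_mem_right : ∀ {M N : Mdl L} (f : M.Carrier ↪[L] N.Carrier), IsStrong f → Mem N
  strong_refl : ∀ {M : Mdl L}, Mem M →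
    IsStrong (FirstOrder.Language.Embedding.refl L M.Carrier)
  strong_comp : ∀ {M N P : Mdl L} (f : M.Carrier ↪[L] N.Carrier)
    (g : N.Carrier ↪[L] P.Carrier), IsStrong f → IsStrong g → IsStrong (g.comp f)
  /-- closure under isomorphisms -/
  iso_strong : ∀ {M N : Mdl L} (e : M.Carrier ≃[L] N.Carrier), Mem M → Mem N →
    IsStrong e.toEmbedding
  /-- coherence -/
  coherence : ∀ {M N P : Mdl L} (f : M.Carrier ↪[L] N.Carrier)
    (g : N.Carrier ↪[L] P.Carrier), IsStrong (g.comp f) → IsStrong g → IsStrong f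
  /-- the Tarski–Vaught chain axioms: every chain has a union, which is a strong
  extension of every member of the chain and embeds strongly into any common
  strong extension (smoothness). -/
  chain : ∀ (I : Type u) (_ : Nonempty I) (_inst : LinearOrder I) (M : I → Mdl L)
    (f : ∀ i j : I, i ≤ j → ((M i).Carrier ↪[L] (M j).Carrier)),
    (∀ i j (h : i ≤ j), IsStrong (f i j h)) →
    (∀ i j k (hij : i ≤ j) (hjk : j ≤ k), (f j k hjk).comp (f i j hij) = f i k (hij.trans hjk)) →
    ∃ (N : Mdl L) (g : ∀ i, (M i).Carrier ↪[L] N.Carrier),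
      (∀ i, IsStrong (g i)) ∧
      (∀ i j (h : i ≤ j), (g j).comp (f i j h) = g i) ∧
      (∀ x : N.Carrier, ∃ i y, g i y = x) ∧
      (∀ (P : Mdl L) (h : N.Carrier ↪[L] P.Carrier),
        (∀ i, IsStrong (h.comp (g i))) → IsStrong h)
  /-- the Löwenheim–Skolem axiom -/
  lowenheimSkolem : ∀ (M : Mdl L), Mem M → ∀ A : Set M.Carrier,
    ∃ (N : Mdl L) (f : N.Carrier ↪[L] M.Carrier), IsStrong f ∧ A ⊆ Set.range f ∧
      #N.Carrier ≤ max #A LS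

variable {L}

/-- A "pointed" realization of a Galois type: a tuple `tup` (indexed by `ι`) inside a model
`M ∈ K`, over the parameter set `A` placed in `M` via `par`. -/
structure TypePt (K : AEC L) (ι A : Type u) : Type (u + 1) where
  M : Mdl L
  mem : K.Mem M
  par : A → M.Carrier
  tup : ι → M.Carrier

/-- The atomic relation generating equality of Galois types: two pointed tuples are related
if they can be mapped into a common model by strong embeddings agreeing on the parameters. -/
def TypePt.EqAtom {K : AEC L} {ι A : Type u} (p q : TypePt K ι A) : Prop :=
  ∃ (N : Mdl L) (f : p.M.Carrier ↪[L] N.Carrier) (g : q.M.Carrier ↪[L] N.Carrier),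
    K.IsStrong f ∧ K.IsStrong g ∧ (∀ a, f (p.par a) = g (q.par a)) ∧
      ∀ i, f (p.tup i) = g (q.tup i)

/-- Equality of Galois types is the transitive (here: equivalence) closure of `EqAtom`. -/
instance gtpSetoid (K : AEC L) (ι A : Type u) : Setoid (TypePt K ι A) :=
  Relation.EqvGen.setoid TypePt.EqAtom

/-- The set of Galois types of `ι`-tuples over the parameter set `A`. -/
def GType (K : AEC L) (ι A : Type u) : Type (u + 1) := Quotient (gtpSetoid K ι A)

/-- The Galois type of a pointed tuple. -/
def gtp {K : AEC L} {ι A : Type u} (p : TypePt K ι A) : GType K ι A :=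
  Quotient.mk (gtpSetoid K ι A) p

/-- `gS^ι(A;M₀,h₀)`: the Galois types of `ι`-tuples over the set `A` (placed in the model `M₀`
by `h₀`), realized in some strong extension of `M₀`. -/
def typesOver (K : AEC L) (ι A : Type u) (M₀ : Mdl L) (h₀ : A → M₀.Carrier) :
    Set (GType K ι A) :=
  {t | ∃ p : TypePt K ι A,
    (∃ f : M₀.Carrier ↪[L] p.M.Carrier, K.IsStrong f ∧ ∀ a, f (h₀ a) = p.par a) ∧ gtp p = t}

/-- `|gS^ι(A)|` for the placed set `(A, h₀)`. -/
noncomputable def gSCard (K : AEC L) (ι A : Type u) (M₀ : Mdl L) (h₀ : A → M₀.Carrier) :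
    Cardinal.{u + 1} :=
  #(typesOver K ι A M₀ h₀)

/-- `|gS^ι(M)|` : Galois types over (the universe of) the model `M`. -/
noncomputable def gSModelCard (K : AEC L) (ι : Type u) (M : Mdl L) : Cardinal.{u + 1} :=
  gSCard K ι M.Carrier M id

/-- `gS^κ_λ := sup { |gS^κ(M)| : M ∈ K, ‖M‖ = λ }`. -/
noncomputable def gSSup (K : AEC L) (ι : Type u) (lam : Cardinal.{u}) : Cardinal.{u + 1} :=
  ⨆ M : {M : Mdl L // K.Mem M ∧ #M.Carrier = lam}, gSModelCard K ι M.1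

/-- `K` is `ι`-stable in `λ`: over every set of size `≤ λ` (in some model of `K`) there are
at most `λ` Galois types of `ι`-tuples. -/
def StableIn (K : AEC L) (ι : Type u) (lam : Cardinal.{u}) : Prop :=
  ∀ (A : Type u), #A ≤ lam → ∀ (M₀ : Mdl L), K.Mem M₀ → ∀ h₀ : A → M₀.Carrier,
    gSCard K ι A M₀ h₀ ≤ Cardinal.lift.{u + 1} lam

/-- restriction of a pointed tuple to a subset of the parameters -/
def TypePt.restrict {K : AEC L} {ι A : Type u} (A₀ : Set A) (p : TypePt K ι A) :
    TypePt K ι A₀ :=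
  ⟨p.M, p.mem, fun a => p.par a.1, p.tup⟩

/-- restriction of a Galois type to a subset of its domain -/
def GType.restrict {K : AEC L} {ι A : Type u} (A₀ : Set A) :
    GType K ι A → GType K ι A₀ :=
  Quotient.map (TypePt.restrict A₀) (by
    intro p q h
    induction h with
    | rel x y hxy =>
        obtain ⟨N, f, g, hf, hg, hpar, htup⟩ := hxy
        exact Relation.EqvGen.rel _ _ ⟨N, f, g, hf, hg, fun a => hpar a.1, htup⟩
    | refl x => exact Relation.EqvGen.refl _
    | symm x y _ ih => exact Relation.EqvGen.symm _ _ ih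
    | trans x y z _ _ ih₁ ih₂ => exact Relation.EqvGen.trans _ _ _ ih₁ ih₂)

/-- `K` is `(<κ)`-tame (for types of single elements). -/
def Tame (K : AEC L) (κ : Cardinal.{u}) : Prop :=
  ∀ (A : Type u) (M₀ : Mdl L), K.Mem M₀ → ∀ (h₀ : A → M₀.Carrier)
    (p q : GType K PUnit.{u + 1} A),
    p ∈ typesOver K PUnit.{u + 1} A M₀ h₀ → q ∈ typesOver K PUnit.{u + 1} A M₀ h₀ → p ≠ q →
    ∃ A₀ : Set A, #A₀ < κ ∧ GType.restrict A₀ p ≠ GType.restrict A₀ q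

/-- the `λ`-amalgamation property -/
def APAt (K : AEC L) (lam : Cardinal.{u}) : Prop :=
  ∀ (M N₁ N₂ : Mdl L) (f₁ : M.Carrier ↪[L] N₁.Carrier) (f₂ : M.Carrier ↪[L] N₂.Carrier),
    #M.Carrier = lam → K.IsStrong f₁ → K.IsStrong f₂ →
    ∃ (P : Mdl L) (g₁ : N₁.Carrier ↪[L] P.Carrier) (g₂ : N₂.Carrier ↪[L] P.Carrier),
      K.IsStrong g₁ ∧ K.IsStrong g₂ ∧ g₁.comp f₁ = g₂.comp f₂

/-- the (full) amalgamation property -/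
def AP (K : AEC L) : Prop :=
  ∀ (M N₁ N₂ : Mdl L) (f₁ : M.Carrier ↪[L] N₁.Carrier) (f₂ : M.Carrier ↪[L] N₂.Carrier),
    K.IsStrong f₁ → K.IsStrong f₂ →
    ∃ (P : Mdl L) (g₁ : N₁.Carrier ↪[L] P.Carrier) (g₂ : N₂.Carrier ↪[L] P.Carrier),
      K.IsStrong g₁ ∧ K.IsStrong g₂ ∧ g₁.comp f₁ = g₂.comp f₂

/-- the `λ`-joint embedding property -/
def JEPAt (K : AEC L) (lam : Cardinal.{u}) : Prop :=
  ∀ (M N : Mdl L), K.Mem M → K.Mem N → #M.Carrier = lam → #N.Carrier = lam →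
    ∃ (P : Mdl L) (f : M.Carrier ↪[L] P.Carrier) (g : N.Carrier ↪[L] P.Carrier),
      K.IsStrong f ∧ K.IsStrong g

/-- the (full) joint embedding property -/
def JEP (K : AEC L) : Prop :=
  ∀ (M N : Mdl L), K.Mem M → K.Mem N →
    ∃ (P : Mdl L) (f : M.Carrier ↪[L] P.Carrier) (g : N.Carrier ↪[L] P.Carrier),
      K.IsStrong f ∧ K.IsStrong g

/-- no maximal model -/
def NMM (K : AEC L) : Prop :=
  ∀ M : Mdl L, K.Mem M → ∃ (N : Mdl L) (f : M.Carrier ↪[L] N.Carrier),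
    K.IsStrong f ∧ ¬ Function.Surjective f

/-- the Galois type of the concatenated pair `a⌢b` over the empty set -/
def gtpPair {K : AEC L} (M : Mdl L) (hM : K.Mem M) (ι : Type u) (a b : ι → M.Carrier) :
    GType K (ι ⊕ ι) PEmpty.{u + 1} :=
  gtp ⟨M, hM, PEmpty.elim, Sum.elim a b⟩

/-- `M` has the `β`-order property* with index (linear) order `I`. -/
def OPStarIn (K : AEC L) (M : Mdl L) (hM : K.Mem M) (β : Ordinal.{u}) (I : Type u)
    [LinearOrder I] : Prop :=
  ∃ a : I → β.ToType → M.Carrier,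
    ∀ i₀ i₁ j₀ j₁ : I, i₀ < i₁ → j₀ < j₁ →
      gtpPair M hM β.ToType (a i₀) (a i₁) ≠ gtpPair M hM β.ToType (a j₁) (a j₀)

/-- `M` has the `β`-order property of length `μ` (index set well-ordered of type `μ`). -/
def OPIn (K : AEC L) (M : Mdl L) (hM : K.Mem M) (β : Ordinal.{u}) (μ : Cardinal.{u}) : Prop :=
  OPStarIn K M hM β μ.ord.ToType

/-- `K` has the `β`-order property of length `μ`. -/
def HasOP (K : AEC L) (β : Ordinal.{u}) (μ : Cardinal.{u}) : Prop :=
  ∃ (M : Mdl L) (hM : K.Mem M), OPIn K M hM β μ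

/-- `K` has the `β`-order property* of length `μ`: the index set may be any linear order of
cardinality `μ`. -/
def HasOPStar (K : AEC L) (β : Ordinal.{u}) (μ : Cardinal.{u}) : Prop :=
  ∃ (I : Type u) (inst : LinearOrder I), #I = μ ∧
    ∃ (M : Mdl L) (hM : K.Mem M), @OPStarIn L K M hM β I inst

/-- `K` has the `(<α)`-order property of length `μ`. -/
def HasLtOP (K : AEC L) (α : Ordinal.{u}) (μ : Cardinal.{u}) : Prop :=
  ∃ β : Ordinal.{u}, 1 ≤ β ∧ β < α ∧ HasOP K β μ

/-- `K` has the `(<α)`-order property* of length `μ`. -/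
def HasLtOPStar (K : AEC L) (α : Ordinal.{u}) (μ : Cardinal.{u}) : Prop :=
  ∃ β : Ordinal.{u}, 1 ≤ β ∧ β < α ∧ HasOPStar K β μ

/-- `ℶ_o(λ)`: the beth function starting at `λ`. -/
noncomputable def bethS (lam : Cardinal.{u}) (o : Ordinal.{u}) : Cardinal.{u} :=
  Ordinal.limitRecOn o lam (fun _ x => (2 : Cardinal.{u}) ^ x)
    (fun o _ ih => ⨆ i : Set.Iio o, ih i.1 i.2)


/-! ### Galois Morleyization: quantifier-free `L̂_{κ,κ}`-formulas -/

/-- Quantifier-free formulas of `L̂_{κ,κ}` in the free-variable context `γ`, where `L̂` is the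
`(<κ)`-Galois Morleyization of `K`: atomic formulas are equalities of `L`-terms, relations of
`L` applied to terms, and the new predicates `R_p` (for `p ∈ gS^{<κ}(∅)`) applied to variables;
formulas are closed under negation and conjunctions of `< κ` many formulas. -/
inductive QF (K : AEC L) (κ : Cardinal.{u}) (γ : Type u) : Type (u + 1)
  | eq (t₁ t₂ : L.Term γ) : QF K κ γ
  | lrel {n : ℕ} (R : L.Relations n) (ts : Fin n → L.Term γ) : QF K κ γ
  | grel (β : Ordinal.{u}) (hβ : β < κ.ord) (p : GType K β.ToType PEmpty.{u + 1})
      (v : β.ToType → γ) : QF K κ γ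
  | not (φ : QF K κ γ) : QF K κ γ
  | conj (J : Type u) (hJ : #J < κ) (f : J → QF K κ γ) : QF K κ γ

/-- Satisfaction of a quantifier-free `L̂_{κ,κ}`-formula in (the Morleyization `M̂` of) a model
`M ∈ K`, under the variable assignment `v`. -/
def QF.Realize {K : AEC L} {κ : Cardinal.{u}} (M : Mdl L) (hM : K.Mem M) {γ : Type u} :
    QF K κ γ → (γ → M.Carrier) → Prop
  | .eq t₁ t₂, v => t₁.realize v = t₂.realize v
  | .lrel R ts, v => FirstOrder.Language.Structure.RelMap R (fun i => (ts i).realize v)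
  | .grel _ _ p vars, v => gtp ⟨M, hM, PEmpty.elim, fun b => v (vars b)⟩ = p
  | .not φ, v => ¬ QF.Realize M hM φ v
  | .conj _ _ f, v => ∀ j, QF.Realize M hM (f j) v

/-- Relabelling the free variables of a quantifier-free formula (in particular, substituting
parameters for some of the variables). -/
def QF.relabel {K : AEC L} {κ : Cardinal.{u}} {γ δ : Type u} (g : γ → δ) :
    QF K κ γ → QF K κ δ
  | .eq t₁ t₂ => .eq (t₁.relabel g) (t₂.relabel g)
  | .lrel R ts => .lrel R (fun i => (ts i).relabel g)
  | .grel β hβ p v => .grel β hβ p (g ∘ v)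
  | .not φ => .not (φ.relabel g)
  | .conj J hJ f => .conj J hJ (fun j => (f j).relabel g)

/-- The `(<κ)`-syntactic type `tp_κ(tup/A; M̂)` of a pointed tuple: the set of quantifier-free
`L̂_{κ,κ}`-formulas over `A` (with free variables `ι ⊕ A`) it satisfies. -/
def TypePt.stp {K : AEC L} {ι A : Type u} (κ : Cardinal.{u}) (p : TypePt K ι A) :
    Set (QF K κ (ι ⊕ A)) :=
  {φ | QF.Realize p.M p.mem φ (Sum.elim p.tup p.par)}

/-- `M̂` has the syntactic `β`-order property of length `χ`. -/
def SynOPIn (K : AEC L) (κ : Cardinal.{u}) (M : Mdl L) (hM : K.Mem M) (β : Ordinal.{u})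
    (χ : Cardinal.{u}) : Prop :=
  ∃ (a : χ.ord.ToType → β.ToType → M.Carrier) (φ : QF K κ (β.ToType ⊕ β.ToType)),
    ∀ i j, i < j ↔ QF.Realize M hM φ (Sum.elim (a i) (a j))

/-- `K̂` has the `(<κ)`-syntactic order property of length `χ`. -/
def HasLtSynOP (K : AEC L) (κ : Cardinal.{u}) (χ : Cardinal.{u}) : Prop :=
  ∃ (β : Ordinal.{u}), β < κ.ord ∧ ∃ (M : Mdl L) (hM : K.Mem M), SynOPIn K κ M hM β χ

/-- `K̂` is `(<κ)`-syntactically stable in `μ`: over every set of size `≤ μ` there are at most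
`μ` syntactic types of tuples of length `< κ`. -/
def SynStableIn (K : AEC L) (κ μ : Cardinal.{u}) : Prop :=
  ∀ (A : Type u), #A ≤ μ → ∀ (M₀ : Mdl L), K.Mem M₀ → ∀ h₀ : A → M₀.Carrier,
    #{q : Σ β : {o : Ordinal.{u} // o < κ.ord}, Set (QF K κ (β.1.ToType ⊕ A)) //
      ∃ p : TypePt K q.1.1.ToType A,
        (∃ f : M₀.Carrier ↪[L] p.M.Carrier, K.IsStrong f ∧ ∀ a, f (h₀ a) = p.par a) ∧
        q.2 = TypePt.stp κ p} ≤ Cardinal.lift.{u + 1} μ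

/-- `p_κ ↾ φ` `φ`-splits over the set `Π` of quantifier-free formulas over `A`, where the
syntactic type `p_κ` is given by the pointed tuple `p`: there are instances `φ(x;b) ∈ p_κ` and
`¬φ(x;c) ∈ p_κ` with `b, c` tuples from `A` satisfying the same formulas of `Π`. -/
def PhiSplits {K : AEC L} {ι A : Type u} (κ : Cardinal.{u}) (p : TypePt K ι A) (Y : Type u)
    (φ : QF K κ (ι ⊕ Y)) (Pi : Set (Σ Z : Type u, QF K κ (Z ⊕ A))) : Prop :=
  ∃ b c : Y → A,
    QF.Realize p.M p.mem φ (Sum.elim p.tup (p.par ∘ b)) ∧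
    ¬ QF.Realize p.M p.mem φ (Sum.elim p.tup (p.par ∘ c)) ∧
    ∀ ψ : QF K κ (Y ⊕ A), (⟨Y, ψ⟩ : Σ Z : Type u, QF K κ (Z ⊕ A)) ∈ Pi →
      (QF.Realize p.M p.mem ψ (Sum.elim (p.par ∘ b) p.par) ↔
        QF.Realize p.M p.mem ψ (Sum.elim (p.par ∘ c) p.par))

/-- the syntactic type given by `p` splits over `Π`. -/
def Splits {K : AEC L} {ι A : Type u} (κ : Cardinal.{u}) (p : TypePt K ι A)
    (Pi : Set (Σ Z : Type u, QF K κ (Z ⊕ A))) : Prop :=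
  ∃ (Y : Type u), #Y < κ ∧ ∃ φ : QF K κ (ι ⊕ Y), PhiSplits κ p Y φ Pi

/-- The bound `χ = |L̂|^{<κ}` on the number of quantifier-free `L̂_{κ,κ}`-formulas. -/
noncomputable def hatFormulaBound (K : AEC L) (κ : Cardinal.{u}) : Cardinal.{u + 1} :=
  (Cardinal.lift.{u + 1} L.card +
      #(Σ β : {o : Ordinal.{u} // o < κ.ord}, GType K β.1.ToType PEmpty.{u + 1}))
    ^< Cardinal.lift.{u + 1} κ

/-- The placed set `(A, h)` is `(<χ)`-compact in `M`. -/
def IsCompactSet (K : AEC L) (κ χ : Cardinal.{u}) (A : Type u) (M : Mdl L) (hM : K.Mem M)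
    (h : A → M.Carrier) : Prop :=
  ∀ (J : Type u), #J < χ → ∀ φ : J → QF K κ (PUnit.{u + 1} ⊕ A),
    (∃ b : M.Carrier, ∀ j, QF.Realize M hM (φ j) (Sum.elim (fun _ => b) h)) →
    ∃ a : A, ∀ j, QF.Realize M hM (φ j) (Sum.elim (fun _ => h a) h)

/-! ### Monster model -/

/-- A monster model for `K`: `K` has AP, JEP and no maximal model, the model `M` is universal,
and any two tuples with the same Galois type over the empty set are conjugate by an
automorphism (so Galois types over subsets of the monster are automorphism orbits). -/
structure Monster (K : AEC L) : Type (u + 1) where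
  M : Mdl L
  mem : K.Mem M
  ap : AP K
  jep : JEP K
  nmm : NMM K
  universal : ∀ N : Mdl L, K.Mem N → ∃ f : N.Carrier ↪[L] M.Carrier, K.IsStrong f
  homogeneous : ∀ (A : Type u) (h₁ h₂ : A → M.Carrier),
    gtp (K := K) ⟨M, mem, PEmpty.elim, h₁⟩ = gtp (K := K) ⟨M, mem, PEmpty.elim, h₂⟩ →
    ∃ e : M.Carrier ≃[L] M.Carrier, ∀ a, e (h₁ a) = h₂ a

/-- Inside a monster model, `gtp(a/B) = gtp(b/B)` iff `a` and `b` are in the same orbit under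
automorphisms fixing `B` pointwise. -/
def OrbEq {K : AEC L} (U : Monster K) (B : Set U.M.Carrier) (a b : U.M.Carrier) : Prop :=
  ∃ e : U.M.Carrier ≃[L] U.M.Carrier, (∀ x ∈ B, e x = x) ∧ e a = b

/-- `K` (with monster `U`) is stable in `μ`: over every subset of the monster of size `≤ μ`
there are at most `μ` Galois types (= orbits) of single elements. -/
def MStableIn {K : AEC L} (U : Monster K) (μ : Cardinal.{u}) : Prop :=
  ∀ B : Set U.M.Carrier, #B ≤ μ → #(Quot (OrbEq U B)) ≤ μ

/-- `gtp(d/B)` `μ`-splits over `A ⊆ B`: there are `A ⊆ B₁, B₂ ⊆ B` with `|B₁| = μ` and an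
isomorphism `f : B₁ ≅_A B₂` (an automorphism of the monster fixing `A`, with `B₂ = f '' B₁`)
such that `f(p) ↾ B₂ ≠ p ↾ B₂`. -/
def MuSplits {K : AEC L} (U : Monster K) (B A : Set U.M.Carrier) (μ : Cardinal.{u})
    (d : U.M.Carrier) : Prop :=
  ∃ (B₁ : Set U.M.Carrier) (e : U.M.Carrier ≃[L] U.M.Carrier),
    A ⊆ B₁ ∧ B₁ ⊆ B ∧ (e '' B₁) ⊆ B ∧ #B₁ = μ ∧ (∀ x ∈ A, e x = x) ∧
    ¬ OrbEq U (e '' B₁) (e d) d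

/-- The `(<κ)`-syntactic type of the tuple `b` over the subset `A` of the monster. -/
def mstp {K : AEC L} (U : Monster K) (κ : Cardinal.{u}) {Y : Type u} (A : Set U.M.Carrier)
    (b : Y → U.M.Carrier) : Set (QF K κ (Y ⊕ ↥A)) :=
  {φ | QF.Realize U.M U.mem φ (Sum.elim b Subtype.val)}

/-- `tp_κ(d/B)` `(<κ)`-syntactically splits over the set of all quantifier-free
`L̂_{κ,κ}`-formulas with parameters in `A`: there are `φ(x;b), ¬φ(x;c) ∈ tp_κ(d/B)` with
`b, c` tuples from `B` having the same syntactic type over `A`. -/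
def MSynSplits {K : AEC L} (U : Monster K) (κ : Cardinal.{u}) (B A : Set U.M.Carrier)
    (d : U.M.Carrier) : Prop :=
  ∃ (Y : Type u) (_ : #Y < κ) (φ : QF K κ (PUnit.{u + 1} ⊕ Y)) (b c : Y → U.M.Carrier),
    (∀ y, b y ∈ B) ∧ (∀ y, c y ∈ B) ∧
    QF.Realize U.M U.mem φ (Sum.elim (fun _ => d) b) ∧
    ¬ QF.Realize U.M U.mem φ (Sum.elim (fun _ => d) c) ∧
    mstp U κ A b = mstp U κ A c

/-- `|gS^{<β}(A)|` for a placed set: the number of Galois types of tuples of length `< β`. -/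
noncomputable def gSLtCard (K : AEC L) (β : Ordinal.{u}) (A : Type u) (M₀ : Mdl L)
    (h₀ : A → M₀.Carrier) : Cardinal.{u + 1} :=
  #{q : Σ γ : {o : Ordinal.{u} // o < β}, GType K γ.1.ToType A //
      q.2 ∈ typesOver K q.1.1.ToType A M₀ h₀}

/-- `K` is `(<β)`-stable in `λ`. -/
def StableLtIn (K : AEC L) (β : Ordinal.{u}) (lam : Cardinal.{u}) : Prop :=
  ∀ (A : Type u), #A ≤ lam → ∀ (M₀ : Mdl L), K.Mem M₀ → ∀ h₀ : A → M₀.Carrier,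
    gSLtCard K β A M₀ h₀ ≤ Cardinal.lift.{u + 1} lam

/-- `κ⁻`: the predecessor cardinal of `κ` if it exists, and `κ` itself otherwise. -/
noncomputable def predCard (κ : Cardinal.{u}) : Cardinal.{u} :=
  sInf {c : Cardinal.{u} | κ ≤ Order.succ c}


/-! ### Auxiliary lemmas for stmt0 -/

section Stmt0Aux

variable {K : AEC L}

/-- Cardinal arithmetic helper: `a ^ c ≤ 2 ^ κ` when `a ≤ 2 ^ κ` and `c ≤ κ`. -/
lemma pow_le_two_power {a c κ : Cardinal.{v}} (hκ : ℵ₀ ≤ κ) (ha : a ≤ 2 ^ κ) (hc : c ≤ κ) :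
    a ^ c ≤ 2 ^ κ := by
  rcases eq_or_ne a 0 with rfl | h
  · refine (Cardinal.zero_power_le c).trans ?_
    exact Cardinal.one_le_iff_ne_zero.mpr (Cardinal.power_ne_zero κ two_ne_zero)
  · calc a ^ c ≤ a ^ κ := Cardinal.power_le_power_left h hc
      _ ≤ (2 ^ κ) ^ κ := Cardinal.power_le_power_right ha
      _ = 2 ^ (κ * κ) := (Cardinal.power_mul ..).symm
      _ = 2 ^ κ := by rw [Cardinal.mul_eq_self hκ]

lemma mk_functions_le (L : FirstOrder.Language.{u, u}) (n : ℕ) :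
    #(L.Functions n) ≤ L.card :=
  Cardinal.mk_le_of_injective (f := fun f => (Sum.inl ⟨n, f⟩ : L.Symbols))
    (by intro a b h; simpa using h)

lemma mk_relations_le (L : FirstOrder.Language.{u, u}) (n : ℕ) :
    #(L.Relations n) ≤ L.card :=
  Cardinal.mk_le_of_injective (f := fun r => (Sum.inr ⟨n, r⟩ : L.Symbols))
    (by intro a b h; simpa using h)

/-- The number of `L`-structures on a set of size at most `κ` is at most `2 ^ κ`. -/
lemma mk_structure_le (L : FirstOrder.Language.{u, u}) (X : Type u) {κ : Cardinal.{u}}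
    (hκ : ℵ₀ ≤ κ) (hL : L.card ≤ κ) (hX : #X ≤ κ) :
    #(L.Structure X) ≤ 2 ^ κ := by
  have hfin : ∀ n : ℕ, #(Fin n → X) ≤ κ := by
    intro n
    rw [Cardinal.mk_arrow, Cardinal.lift_uzero, Cardinal.mk_fin, Cardinal.lift_natCast,
      Cardinal.power_natCast]
    exact (pow_le_pow_left₀ zero_le hX n).trans (Cardinal.power_nat_le hκ)
  have htwo : (2 : Cardinal.{u}) ^ κ * 2 ^ κ = 2 ^ κ :=
    Cardinal.mul_eq_self (hκ.trans (Cardinal.cantor κ).le)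
  have hpow : ((2 : Cardinal.{u}) ^ κ) ^ (ℵ₀ : Cardinal.{u}) = 2 ^ κ := by
    rw [← Cardinal.power_mul, Cardinal.mul_aleph0_eq hκ]
  have h1 : #(∀ n : ℕ, L.Functions n → (Fin n → X) → X) ≤ 2 ^ κ := by
    rw [Cardinal.mk_pi]
    refine le_trans (Cardinal.prod_le_prod _ (fun _ : ℕ => 2 ^ κ) fun n => ?_) ?_
    · rw [← Cardinal.power_def]
      refine pow_le_two_power hκ ?_ ((mk_functions_le L n).trans hL)
      rw [← Cardinal.power_def]
      exact pow_le_two_power hκ (hX.trans (Cardinal.cantor κ).le) (hfin n)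
    · rw [Cardinal.prod_const, Cardinal.lift_uzero, Cardinal.mk_nat, Cardinal.lift_aleph0]
      exact hpow.le
  have h2 : #(∀ n : ℕ, L.Relations n → (Fin n → X) → Prop) ≤ 2 ^ κ := by
    rw [Cardinal.mk_pi]
    refine le_trans (Cardinal.prod_le_prod _ (fun _ : ℕ => 2 ^ κ) fun n => ?_) ?_
    · rw [← Cardinal.power_def]
      refine pow_le_two_power hκ ?_ ((mk_relations_le L n).trans hL)
      rw [Cardinal.mk_arrow, Cardinal.mk_Prop, Cardinal.lift_uzero, Cardinal.lift_two]
      exact pow_le_two_power hκ (((Cardinal.nat_lt_aleph0 2).le.trans hκ).trans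
        (Cardinal.cantor κ).le) (hfin n)
    · rw [Cardinal.prod_const, Cardinal.lift_uzero, Cardinal.mk_nat, Cardinal.lift_aleph0]
      exact hpow.le
  have hinj : Function.Injective (fun S : L.Structure X =>
      ((fun n (f : L.Functions n) => S.funMap f, fun n (r : L.Relations n) => S.RelMap r) :
        (∀ n, L.Functions n → (Fin n → X) → X) × (∀ n, L.Relations n → (Fin n → X) → Prop))) := by
    have : Function.LeftInverse
        (fun p : (∀ n, L.Functions n → (Fin n → X) → X) ×
            (∀ n, L.Relations n → (Fin n → X) → Prop) =>
          (⟨fun {n} f => p.1 n f, fun {n} r => p.2 n r⟩ : L.Structure X))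
        (fun S : L.Structure X =>
          (fun n (f : L.Functions n) => S.funMap f, fun n (r : L.Relations n) => S.RelMap r)) := by
      intro S; cases S; rfl
    exact this.injective
  refine (Cardinal.mk_le_of_injective hinj).trans ?_
  rw [Cardinal.mk_prod, Cardinal.lift_id, Cardinal.lift_id]
  calc _ ≤ (2 : Cardinal.{u}) ^ κ * 2 ^ κ := mul_le_mul' h1 h2
    _ = 2 ^ κ := htwo

end Stmt0Aux
section Stmt0Aux2

variable {K : AEC L}

/-- Invariant of `EqvGen EqAtom`: coincidences between parameters and tuple entries. -/
lemma eqvGen_par_eq_tup {ι A : Type u} {p q : TypePt K ι A}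
    (h : Relation.EqvGen TypePt.EqAtom p q) :
    ∀ a i, p.par a = p.tup i ↔ q.par a = q.tup i := by
  induction h with
  | rel x y hxy =>
      obtain ⟨N, f, g, _, _, hpar, htup⟩ := hxy
      intro a i
      constructor
      · intro h; apply g.injective; rw [← hpar, ← htup, h]
      · intro h; apply f.injective; rw [hpar, htup, h]
  | refl x => exact fun a i => Iff.rfl
  | symm x y _ ih => exact fun a i => (ih a i).symm
  | trans x y z _ _ ih₁ ih₂ => exact fun a i => (ih₁ a i).trans (ih₂ a i)

lemma gtp_id_injective {ι : Type u} (M : Mdl L) (hM : K.Mem M) :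
    Function.Injective fun t : ι → M.Carrier => gtp (K := K) ⟨M, hM, id, t⟩ := by
  intro t t' h
  have h' := eqvGen_par_eq_tup (Quotient.exact h)
  funext i
  exact (h' (t i) i).mp rfl

lemma gtp_id_mem_typesOver {ι : Type u} (M : Mdl L) (hM : K.Mem M) (t : ι → M.Carrier) :
    gtp (K := K) ⟨M, hM, id, t⟩ ∈ typesOver K ι M.Carrier M id :=
  ⟨⟨M, hM, id, t⟩, ⟨FirstOrder.Language.Embedding.refl L M.Carrier, K.strong_refl hM,
    fun _ => rfl⟩, rfl⟩

/-- Lower bound: distinct tuples from `M` itself realize distinct Galois types over `M`. -/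
lemma lift_power_le_gSModelCard {ι : Type u} (M : Mdl L) (hM : K.Mem M) :
    Cardinal.lift.{u + 1} (#M.Carrier ^ #ι) ≤ gSModelCard K ι M := by
  rw [Cardinal.power_def]
  rw [show gSModelCard K ι M = #(typesOver K ι M.Carrier M id) from rfl]
  rw [← Cardinal.mk_uLift]
  refine Cardinal.mk_le_of_injective (f := fun t : ULift.{u + 1} (ι → M.Carrier) =>
    (⟨gtp (K := K) ⟨M, hM, id, t.down⟩, gtp_id_mem_typesOver M hM t.down⟩ :
      typesOver K ι M.Carrier M id)) ?_
  intro t t' h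
  exact ULift.ext _ _ (gtp_id_injective M hM (congrArg Subtype.val h))

/-- Codes for small pointed tuples: a subset of `T` with an `L`-structure, and maps into it. -/
def CodePt (L : FirstOrder.Language.{u, u}) (T ι A : Type u) : Type u :=
  Σ s : Set T, (L.Structure s) × (A → s) × (ι → s)

/-- The model coded by a code. -/
def CodePt.toMdl {T ι A : Type u} (c : CodePt L T ι A) : Mdl L := ⟨c.1, c.2.1⟩

/-- A pointed tuple matches a code if it is isomorphic to it as a pointed structure. -/
def Matches {ι A T : Type u} (p : TypePt K ι A) (c : CodePt L T ι A) : Prop :=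
  ∃ e : p.M.Carrier ≃[L] c.toMdl.Carrier,
    (∀ a, e (p.par a) = c.2.2.1 a) ∧ (∀ i, e (p.tup i) = c.2.2.2 i)

lemma gtp_eq_of_matches {ι A T : Type u} {p q : TypePt K ι A} {c : CodePt L T ι A}
    (hp : Matches p c) (hq : Matches q c) : gtp p = gtp q := by
  obtain ⟨e₁, hpar₁, htup₁⟩ := hp
  obtain ⟨e₂, hpar₂, htup₂⟩ := hq
  refine Quotient.sound (Relation.EqvGen.rel _ _ ?_)
  refine ⟨q.M, (e₂.symm.comp e₁).toEmbedding, FirstOrder.Language.Embedding.refl L _,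
    K.iso_strong _ p.mem q.mem, K.strong_refl q.mem, fun a => ?_, fun i => ?_⟩
  · show e₂.symm (e₁ (p.par a)) = q.par a
    rw [hpar₁ a, ← hpar₂ a, e₂.symm_apply_apply]
  · show e₂.symm (e₁ (p.tup i)) = q.tup i
    rw [htup₁ i, ← htup₂ i, e₂.symm_apply_apply]

/-- Decoding a code into a Galois type. -/
noncomputable def decode {ι A T : Type u} (K : AEC L) [Nonempty (GType K ι A)]
    (c : CodePt L T ι A) : GType K ι A :=
  @dite _ (∃ p : TypePt K ι A, Matches p c) (Classical.dec _)
    (fun h => gtp h.choose) (fun _ => Classical.arbitrary _)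

lemma decode_eq {ι A T : Type u} [Nonempty (GType K ι A)] {p : TypePt K ι A}
    {c : CodePt L T ι A} (hp : Matches p c) : decode K c = gtp p := by
  rw [decode, dif_pos ⟨p, hp⟩]
  exact gtp_eq_of_matches (Exists.choose_spec (⟨p, hp⟩ : ∃ p, Matches p c)) hp

/-- Every Galois type has a representative on a model of size at most `κ`. -/
lemma exists_small_rep {ι A : Type u} {κ : Cardinal.{u}} (hκ : ℵ₀ ≤ κ) (hLS : K.LS ≤ κ)
    (hA : #A ≤ κ) (hι : #ι ≤ κ) (p : TypePt K ι A) :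
    ∃ q : TypePt K ι A, gtp q = gtp p ∧ #q.M.Carrier ≤ κ := by
  obtain ⟨N, f, hf, hsub, hcard⟩ :=
    K.lowenheimSkolem p.M p.mem (Set.range p.par ∪ Set.range p.tup)
  have hpar : ∀ a, p.par a ∈ Set.range f := fun a => hsub (Set.mem_union_left _ ⟨a, rfl⟩)
  have htup : ∀ i, p.tup i ∈ Set.range f := fun i => hsub (Set.mem_union_right _ ⟨i, rfl⟩)
  refine ⟨⟨N, K.strong_mem_left f hf, fun a => (hpar a).choose, fun i => (htup i).choose⟩,
    ?_, ?_⟩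
  · refine Quotient.sound (Relation.EqvGen.rel _ _ ?_)
    exact ⟨p.M, f, FirstOrder.Language.Embedding.refl L _, hf, K.strong_refl p.mem,
      fun a => (hpar a).choose_spec, fun i => (htup i).choose_spec⟩
  · refine hcard.trans (max_le ?_ hLS)
    refine (Cardinal.mk_union_le _ _).trans ?_
    calc #(Set.range p.par) + #(Set.range p.tup) ≤ #A + #ι :=
          add_le_add Cardinal.mk_range_le Cardinal.mk_range_le
      _ ≤ κ + κ := add_le_add hA hι
      _ = κ := Cardinal.add_eq_self hκ

/-- Upper bound on the total number of Galois types over a small parameter set. -/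
lemma mk_gType_le {ι A : Type u} {κ : Cardinal.{u}} (hκ : ℵ₀ ≤ κ) (hLS : K.LS ≤ κ)
    (hL : L.card ≤ κ) (hA : #A ≤ κ) (hι : #ι ≤ κ) :
    #(GType K ι A) ≤ Cardinal.lift.{u + 1} ((2 : Cardinal.{u}) ^ κ) := by
  rcases isEmpty_or_nonempty (GType K ι A) with h | h
  · simp [Cardinal.mk_eq_zero (GType K ι A)]
  have hsurj : Function.Surjective fun c : ULift.{u + 1} (CodePt L κ.out ι A) =>
      decode K c.down := by
    intro t
    obtain ⟨p, rfl⟩ := Quotient.exists_rep t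
    obtain ⟨q, hq, hcard⟩ := exists_small_rep hκ hLS hA hι p
    obtain ⟨j⟩ := (Cardinal.le_def _ _).mp (hcard.trans_eq (Cardinal.mk_out κ).symm)
    let e0 : q.M.Carrier ≃ Set.range j := Equiv.ofInjective j j.injective
    letI st : L.Structure (Set.range j) := e0.inducedStructure
    refine ⟨⟨⟨Set.range j, st, fun a => e0 (q.par a), fun i => e0 (q.tup i)⟩⟩, ?_⟩
    have hm : Matches q ⟨Set.range j, st, fun a => e0 (q.par a), fun i => e0 (q.tup i)⟩ :=
      ⟨e0.inducedStructureEquiv, fun a => rfl, fun i => rfl⟩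
    exact (decode_eq hm).trans hq
  calc #(GType K ι A) ≤ #(ULift.{u + 1} (CodePt L κ.out ι A)) :=
        Cardinal.mk_le_of_surjective hsurj
    _ = Cardinal.lift.{u + 1} #(CodePt L κ.out ι A) := Cardinal.mk_uLift _
    _ ≤ Cardinal.lift.{u + 1} ((2 : Cardinal.{u}) ^ κ) := by
        refine Cardinal.lift_le.mpr ?_
        have hT : #(Quotient.out κ) ≤ κ := (Cardinal.mk_out κ).le
        have h2κ : ℵ₀ ≤ (2 : Cardinal.{u}) ^ κ := hκ.trans (Cardinal.cantor κ).le
        rw [CodePt, Cardinal.mk_sigma]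
        refine le_trans (Cardinal.sum_le_sum _ (fun _ => (2 : Cardinal.{u}) ^ κ) fun s => ?_) ?_
        · rw [Cardinal.mk_prod, Cardinal.mk_prod, Cardinal.lift_id, Cardinal.lift_id,
            Cardinal.lift_id, Cardinal.lift_id]
          have hs : #s ≤ κ := (Cardinal.mk_set_le s).trans hT
          have hst := mk_structure_le L s hκ hL hs
          have hpar : #(A → s) ≤ 2 ^ κ := by
            rw [← Cardinal.power_def]
            exact pow_le_two_power hκ (hs.trans (Cardinal.cantor κ).le) hA
          have htup : #(ι → s) ≤ 2 ^ κ := by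
            rw [← Cardinal.power_def]
            exact pow_le_two_power hκ (hs.trans (Cardinal.cantor κ).le) hι
          calc #(L.Structure s) * (#(A → s) * #(ι → s)) ≤
                2 ^ κ * (2 ^ κ * 2 ^ κ) := by
                  exact mul_le_mul' hst (mul_le_mul' hpar htup)
            _ = 2 ^ κ := by rw [Cardinal.mul_eq_self h2κ, Cardinal.mul_eq_self h2κ]
        · rw [Cardinal.sum_const', Cardinal.mk_set]
          calc (2 : Cardinal.{u}) ^ #(Quotient.out κ) * 2 ^ κ ≤ 2 ^ κ * 2 ^ κ :=
                mul_le_mul' (Cardinal.power_le_power_left two_ne_zero hT) le_rfl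
            _ = 2 ^ κ := Cardinal.mul_eq_self h2κ

end Stmt0Aux2
/-- if `K` has `λ`-AP and `κ ≥ λ`, then `(gS¹_λ)^κ = gS^κ_λ`. -/
theorem stmt0 (L : FirstOrder.Language.{u, u}) (K : AEC L) (lam κ : Cardinal.{u})
    (hls : K.LS ≤ lam) (hap : APAt K lam) (hκ : lam ≤ κ) :
    gSSup K PUnit.{u + 1} lam ^ Cardinal.lift.{u + 1} κ = gSSup K κ.out lam := by
  have hlamω : ℵ₀ ≤ lam := le_add_self.trans (K.LS_ge.trans hls)
  have hκω : ℵ₀ ≤ κ := hlamω.trans hκ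
  have hLSκ : K.LS ≤ κ := hls.trans hκ
  have hLκ : L.card ≤ κ := (self_le_add_right _ _).trans (K.LS_ge.trans hLSκ)
  have h2lam : (2 : Cardinal.{u}) ≤ lam := (Cardinal.nat_lt_aleph0 2).le.trans hlamω
  set B : Cardinal.{u + 1} := 2 ^ Cardinal.lift.{u + 1} κ with hB
  have hlift : Cardinal.lift.{u + 1} ((2 : Cardinal.{u}) ^ κ) = B := by
    rw [hB, Cardinal.lift_power, Cardinal.lift_two]
  rcases isEmpty_or_nonempty {M : Mdl L // K.Mem M ∧ #M.Carrier = lam} with hemp | hne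
  · rw [gSSup, gSSup, ciSup_of_empty, ciSup_of_empty]
    have hne0 : Cardinal.lift.{u + 1} κ ≠ 0 :=
      by simp [Cardinal.lift_eq_zero]; exact (Cardinal.aleph0_pos.trans_le hκω).ne'
    simpa using Cardinal.zero_power hne0
  · obtain ⟨⟨M₀, hM₀, hcard₀⟩⟩ := hne
    have hub : ∀ (ι : Type u), #ι ≤ κ →
        ∀ M : {M : Mdl L // K.Mem M ∧ #M.Carrier = lam}, gSModelCard K ι M.1 ≤ B := by
      intro ι hι M
      rw [show gSModelCard K ι M.1 = #(typesOver K ι M.1.Carrier M.1 id) from rfl]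
      refine le_trans (Cardinal.mk_set_le _) ?_
      refine le_trans (mk_gType_le hκω hLSκ hLκ ?_ hι) hlift.le
      rw [M.2.2]; exact hκ
    have hbdd : ∀ ι : Type u, #ι ≤ κ → BddAbove (Set.range
        fun M : {M : Mdl L // K.Mem M ∧ #M.Carrier = lam} => gSModelCard K ι M.1) := by
      intro ι hι
      exact ⟨B, by rintro x ⟨M, rfl⟩; exact hub ι hι M⟩
    have hκout : #(Quotient.out κ) = κ := Cardinal.mk_out κ
    have h1le : #(PUnit.{u + 1} : Type u) ≤ κ := by
      rw [Cardinal.mk_punit]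
      exact Cardinal.one_le_aleph0.trans hκω
    have hlow1 : Cardinal.lift.{u + 1} lam ≤ gSSup K PUnit.{u + 1} lam := by
      have h := lift_power_le_gSModelCard (K := K) (ι := PUnit.{u + 1}) M₀ hM₀
      rw [hcard₀, Cardinal.mk_punit, Cardinal.power_one] at h
      exact h.trans (le_ciSup (hbdd _ h1le) ⟨M₀, hM₀, hcard₀⟩)
    have hSle : gSSup K PUnit.{u + 1} lam ≤ B := ciSup_le' fun M => hub _ h1le M
    have hRHS : gSSup K κ.out lam = B := by
      refine le_antisymm (ciSup_le' fun M => hub _ hκout.le M) ?_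
      have h := lift_power_le_gSModelCard (K := K) (ι := κ.out) M₀ hM₀
      rw [hcard₀, hκout, Cardinal.power_eq_two_power hκω h2lam hκ, hlift] at h
      exact h.trans (le_ciSup (hbdd _ hκout.le) ⟨M₀, hM₀, hcard₀⟩)
    rw [hRHS]
    have h2lift : (2 : Cardinal.{u + 1}) ≤ Cardinal.lift.{u + 1} lam :=
      calc (2 : Cardinal.{u + 1}) = Cardinal.lift.{u + 1} (2 : Cardinal.{u}) :=
            Cardinal.lift_two.symm
        _ ≤ Cardinal.lift.{u + 1} lam := Cardinal.lift_le.mpr h2lam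
    refine le_antisymm ?_ ?_
    · calc gSSup K PUnit.{u + 1} lam ^ Cardinal.lift.{u + 1} κ
          ≤ B ^ Cardinal.lift.{u + 1} κ := Cardinal.power_le_power_right hSle
        _ = 2 ^ (Cardinal.lift.{u + 1} κ * Cardinal.lift.{u + 1} κ) :=
            (Cardinal.power_mul ..).symm
        _ = B := by rw [Cardinal.mul_eq_self (Cardinal.aleph0_le_lift.mpr hκω)]
    · calc B = 2 ^ Cardinal.lift.{u + 1} κ := rfl
        _ ≤ Cardinal.lift.{u + 1} lam ^ Cardinal.lift.{u + 1} κ :=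
            Cardinal.power_le_power_right h2lift
        _ ≤ gSSup K PUnit.{u + 1} lam ^ Cardinal.lift.{u + 1} κ :=
            Cardinal.power_le_power_right hlow1

end AECStmt
end

section
/- Let K be an AEC, κ an infinite cardinal, and K̂ the (<κ)-Galois Morleyization of K. For each Galois type p = gtp(b/A;M) ∈ gS(A) let p_κ := tp_κ(b/A;M̂) be its (<κ)-syntactic type. Then K is (<κ)-tame if and only if for every set A contained in a model of K, the map p ↦ p_κ is a well-defined bijection from gS(A) onto the set of (<κ)-syntactic types of single elements over A. -/
universe u

open Cardinal Set FirstOrder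

namespace AECStmt

variable (L : FirstOrder.Language.{u, u})

variable {L}

section Proof

variable {L : FirstOrder.Language.{u, u}} {K : AEC L} {κ : Cardinal.{u}}

private lemma typept_mk_eq {ι A : Type u} {M : Mdl L} {h h' : K.Mem M}
    {par par' : A → M.Carrier} {tup tup' : ι → M.Carrier}
    (hp : par = par') (ht : tup = tup') :
    (⟨M, h, par, tup⟩ : TypePt K ι A) = ⟨M, h', par', tup'⟩ := by
  subst hp; subst ht; rfl

private lemma gtp_embed {M N : Mdl L} (hM : K.Mem M) (hN : K.Mem N)
    (f : M.Carrier ↪[L] N.Carrier) (hf : K.IsStrong f) {β : Type u}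
    (tup : β → M.Carrier) :
    gtp (K := K) (A := PEmpty.{u+1}) ⟨M, hM, PEmpty.elim, tup⟩ =
      gtp ⟨N, hN, PEmpty.elim, f ∘ tup⟩ :=
  Quotient.sound (Relation.EqvGen.rel _ _
    ⟨N, f, FirstOrder.Language.Embedding.refl L N.Carrier, hf, K.strong_refl hN,
      fun a => a.elim, fun _ => rfl⟩)

private lemma realize_embed {M N : Mdl L} (hM : K.Mem M) (hN : K.Mem N)
    (f : M.Carrier ↪[L] N.Carrier) (hf : K.IsStrong f) {γ : Type u}
    (φ : QF K κ γ) (v : γ → M.Carrier) :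
    QF.Realize N hN φ (f ∘ v) ↔ QF.Realize M hM φ v := by
  induction φ with
  | eq t₁ t₂ =>
      show t₁.realize (f ∘ v) = t₂.realize (f ∘ v) ↔ t₁.realize v = t₂.realize v
      rw [FirstOrder.Language.HomClass.realize_term, FirstOrder.Language.HomClass.realize_term]
      exact f.injective.eq_iff
  | lrel R ts =>
      show FirstOrder.Language.Structure.RelMap R (fun i => (ts i).realize (f ∘ v)) ↔
        FirstOrder.Language.Structure.RelMap R (fun i => (ts i).realize v)
      have h1 : (fun i => (ts i).realize (f ∘ v)) = f ∘ fun i => (ts i).realize v := by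
        funext i; exact FirstOrder.Language.HomClass.realize_term f
      rw [h1]
      exact f.map_rel R _
  | grel β hβ p vars =>
      show gtp ⟨N, hN, PEmpty.elim, fun b => (f ∘ v) (vars b)⟩ = p ↔
        gtp ⟨M, hM, PEmpty.elim, fun b => v (vars b)⟩ = p
      have h1 : (⟨N, hN, PEmpty.elim, fun b => (f ∘ v) (vars b)⟩ : TypePt K _ _) =
          ⟨N, hN, PEmpty.elim, f ∘ fun b => v (vars b)⟩ := rfl
      rw [h1, ← gtp_embed hM hN f hf]
  | not φ ih => exact not_congr ih
  | conj J hJ g ih => exact forall_congr' ih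

private lemma realize_of_gtp_eq {ι A : Type u} {p q : TypePt K ι A} (h : gtp p = gtp q)
    (φ : QF K κ (ι ⊕ A)) :
    QF.Realize p.M p.mem φ (Sum.elim p.tup p.par) ↔
      QF.Realize q.M q.mem φ (Sum.elim q.tup q.par) := by
  have h' : Relation.EqvGen TypePt.EqAtom p q := Quotient.exact h
  clear h
  induction h' with
  | rel x y hxy =>
      obtain ⟨N, f, g, hf, hg, hpar, htup⟩ := hxy
      have hN : K.Mem N := K.strong_mem_right f hf
      have he : f ∘ Sum.elim x.tup x.par = g ∘ Sum.elim y.tup y.par := by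
        funext i
        cases i with
        | inl i => exact htup i
        | inr a => exact hpar a
      rw [← realize_embed x.mem hN f hf φ (Sum.elim x.tup x.par), he,
        realize_embed y.mem hN g hg φ]
  | refl x => exact Iff.rfl
  | symm x y _ ih => exact ih.symm
  | trans x y z _ _ ih₁ ih₂ => exact ih₁.trans ih₂

private lemma restrict_gtp_eq_of_combined {ι A : Type u} (A₀ : Set A)
    (p q : TypePt K ι A) {β : Type u} (e : β ≃ (ι ⊕ ↥A₀))
    (h : gtp (K := K) (A := PEmpty.{u+1})
        ⟨p.M, p.mem, PEmpty.elim, Sum.elim p.tup (fun a : ↥A₀ => p.par a.1) ∘ e⟩ =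
      gtp ⟨q.M, q.mem, PEmpty.elim, Sum.elim q.tup (fun a : ↥A₀ => q.par a.1) ∘ e⟩) :
    gtp (p.restrict A₀) = gtp (q.restrict A₀) := by
  set F : TypePt K β PEmpty.{u+1} → TypePt K ι ↥A₀ := fun r =>
    ⟨r.M, r.mem, fun a => r.tup (e.symm (Sum.inr a)), fun i => r.tup (e.symm (Sum.inl i))⟩
    with hF
  have main : ∀ x y : TypePt K β PEmpty.{u+1}, Relation.EqvGen TypePt.EqAtom x y →
      Relation.EqvGen TypePt.EqAtom (F x) (F y) := by
    intro x y hxy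
    induction hxy with
    | rel x y hxy =>
        obtain ⟨N, f, g, hf, hg, hpar, htup⟩ := hxy
        exact .rel _ _ ⟨N, f, g, hf, hg, fun a => htup _, fun i => htup _⟩
    | refl x => exact .refl _
    | symm _ _ _ ih => exact .symm _ _ ih
    | trans _ _ _ _ _ ih₁ ih₂ => exact .trans _ _ _ ih₁ ih₂
  have key := main _ _ (Quotient.exact h)
  have h1 : F ⟨p.M, p.mem, PEmpty.elim, Sum.elim p.tup (fun a : ↥A₀ => p.par a.1) ∘ e⟩ =
      p.restrict A₀ := by
    rw [hF]
    refine typept_mk_eq ?_ ?_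
    · funext a
      show Sum.elim p.tup (fun a : ↥A₀ => p.par a.1) (e (e.symm (Sum.inr a))) = p.par a.1
      rw [Equiv.apply_symm_apply]
      rfl
    · funext i
      show Sum.elim p.tup (fun a : ↥A₀ => p.par a.1) (e (e.symm (Sum.inl i))) = p.tup i
      rw [Equiv.apply_symm_apply]
      rfl
  have h2 : F ⟨q.M, q.mem, PEmpty.elim, Sum.elim q.tup (fun a : ↥A₀ => q.par a.1) ∘ e⟩ =
      q.restrict A₀ := by
    rw [hF]
    refine typept_mk_eq ?_ ?_
    · funext a
      show Sum.elim q.tup (fun a : ↥A₀ => q.par a.1) (e (e.symm (Sum.inr a))) = q.par a.1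
      rw [Equiv.apply_symm_apply]
      rfl
    · funext i
      show Sum.elim q.tup (fun a : ↥A₀ => q.par a.1) (e (e.symm (Sum.inl i))) = q.tup i
      rw [Equiv.apply_symm_apply]
      rfl
  rw [h1, h2] at key
  exact Quotient.sound key

private lemma restrict_gtp_eq_of_stp (hκ : ℵ₀ ≤ κ) {A : Type u}
    (p q : TypePt K PUnit.{u+1} A) (hstp : TypePt.stp κ p = TypePt.stp κ q)
    (A₀ : Set A) (hA₀ : #↥A₀ < κ) :
    gtp (p.restrict A₀) = gtp (q.restrict A₀) := by
  have hc : #(PUnit.{u+1} ⊕ ↥A₀) < κ := by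
    rw [Cardinal.mk_sum, Cardinal.mk_punit, Cardinal.lift_id, Cardinal.lift_id]
    exact Cardinal.add_lt_of_lt hκ (lt_of_lt_of_le Cardinal.one_lt_aleph0 hκ) hA₀
  have hβ : (#(PUnit.{u+1} ⊕ ↥A₀)).ord < κ.ord := Cardinal.ord_lt_ord.mpr hc
  have hcard : #(#(PUnit.{u+1} ⊕ ↥A₀)).ord.ToType = #(PUnit.{u+1} ⊕ ↥A₀) :=
    Cardinal.mk_ord_toType _
  obtain ⟨e⟩ : Nonempty ((#(PUnit.{u+1} ⊕ ↥A₀)).ord.ToType ≃ (PUnit.{u+1} ⊕ ↥A₀)) :=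
    Cardinal.eq.mp hcard
  set v : (#(PUnit.{u+1} ⊕ ↥A₀)).ord.ToType → PUnit.{u+1} ⊕ A :=
    Sum.map id Subtype.val ∘ e with hv
  have hass : ∀ r : TypePt K PUnit.{u+1} A,
      (fun b => Sum.elim r.tup r.par (v b)) =
        Sum.elim r.tup (fun a : ↥A₀ => r.par a.1) ∘ e := by
    intro r
    funext b
    show Sum.elim r.tup r.par (Sum.map id Subtype.val (e b)) =
      Sum.elim r.tup (fun a : ↥A₀ => r.par a.1) (e b)
    cases e b with
    | inl u => rfl
    | inr a => rfl
  set P : GType K (#(PUnit.{u+1} ⊕ ↥A₀)).ord.ToType PEmpty.{u+1} :=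
    gtp ⟨p.M, p.mem, PEmpty.elim, Sum.elim p.tup (fun a : ↥A₀ => p.par a.1) ∘ e⟩ with hP
  have hmem : QF.grel (K := K) (κ := κ) _ hβ P v ∈ TypePt.stp κ p := by
    show gtp ⟨p.M, p.mem, PEmpty.elim, fun b => Sum.elim p.tup p.par (v b)⟩ = P
    rw [hP]
    exact congrArg gtp (typept_mk_eq rfl (hass p))
  rw [hstp] at hmem
  have hq : gtp ⟨q.M, q.mem, PEmpty.elim, fun b => Sum.elim q.tup q.par (v b)⟩ = P := hmem
  have hq' : gtp (K := K) (A := PEmpty.{u+1})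
      ⟨q.M, q.mem, PEmpty.elim, Sum.elim q.tup (fun a : ↥A₀ => q.par a.1) ∘ e⟩ = P := by
    rw [← hq]
    exact congrArg gtp (typept_mk_eq rfl (hass q).symm)
  exact restrict_gtp_eq_of_combined A₀ p q e (hP.symm.trans hq'.symm)

end Proof

private def varsSet {L : FirstOrder.Language.{u, u}} {γ : Type u} : L.Term γ → Set γ
  | .var i => {i}
  | .func _ ts => ⋃ i, varsSet (ts i)

private lemma varsSet_finite {L : FirstOrder.Language.{u, u}} {γ : Type u} (t : L.Term γ) :
    (varsSet t).Finite := by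
  induction t with
  | var i => exact Set.finite_singleton i
  | func f ts ih => exact Set.finite_iUnion ih

private lemma realize_congr_vars {L : FirstOrder.Language.{u, u}} {γ : Type u} {M : Type u}
    [L.Structure M] (t : L.Term γ) {v₁ v₂ : γ → M} (h : ∀ a ∈ varsSet t, v₁ a = v₂ a) :
    t.realize v₁ = t.realize v₂ := by
  induction t with
  | var i => exact h i rfl
  | func f ts ih =>
      show FirstOrder.Language.Structure.funMap f (fun i => (ts i).realize v₁) =
        FirstOrder.Language.Structure.funMap f (fun i => (ts i).realize v₂)
      congr 1
      funext i
      exact ih i fun a ha => h a (Set.mem_iUnion.mpr ⟨i, ha⟩)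

open scoped Classical in
private noncomputable def toSub {A : Type u} (S : Set A) :
    PUnit.{u+1} ⊕ A → PUnit.{u+1} ⊕ ↥S
  | .inl _ => .inl PUnit.unit
  | .inr a => if h : a ∈ S then .inr ⟨a, h⟩ else .inl PUnit.unit

private lemma relabel_realize_eq {L : FirstOrder.Language.{u, u}} {K : AEC L} {A : Type u}
    (S : Set A) (r : TypePt K PUnit.{u+1} A)
    (t : L.Term (PUnit.{u+1} ⊕ A)) (ht : ∀ a, Sum.inr a ∈ varsSet t → a ∈ S) :
    (t.relabel (toSub S)).realize (Sum.elim r.tup fun a : ↥S => r.par a.1) =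
      t.realize (Sum.elim r.tup r.par) := by
  rw [FirstOrder.Language.Term.realize_relabel]
  apply realize_congr_vars
  intro x hx
  cases x with
  | inl u => rfl
  | inr a =>
      have ha : a ∈ S := ht a hx
      show Sum.elim r.tup (fun a : ↥S => r.par a.1) (toSub S (Sum.inr a)) = r.par a
      have : toSub S (Sum.inr a) = Sum.inr ⟨a, ha⟩ := dif_pos ha
      rw [this]
      rfl

section Proof2

variable {L : FirstOrder.Language.{u, u}} {K : AEC L} {κ : Cardinal.{u}}

private lemma realize_iff_of_restrict (hκ : ℵ₀ ≤ κ) {A : Type u}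
    (p q : TypePt K PUnit.{u+1} A)
    (hres : ∀ A₀ : Set A, #↥A₀ < κ → gtp (p.restrict A₀) = gtp (q.restrict A₀))
    (φ : QF K κ (PUnit.{u+1} ⊕ A)) :
    QF.Realize p.M p.mem φ (Sum.elim p.tup p.par) ↔
      QF.Realize q.M q.mem φ (Sum.elim q.tup q.par) := by
  induction φ with
  | eq t₁ t₂ =>
      set S : Set A := {a | Sum.inr a ∈ varsSet t₁ ∪ varsSet t₂} with hSdef
      have hfin : S.Finite := by
        have : S = Sum.inr ⁻¹' (varsSet t₁ ∪ varsSet t₂) := rfl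
        rw [this]
        exact Set.Finite.preimage Sum.inr_injective.injOn
          ((varsSet_finite t₁).union (varsSet_finite t₂))
      have hS : #↥S < κ := lt_of_lt_of_le hfin.lt_aleph0 hκ
      have key := realize_of_gtp_eq (κ := κ) (hres S hS)
        (QF.eq (t₁.relabel (toSub S)) (t₂.relabel (toSub S)))
      show t₁.realize (Sum.elim p.tup p.par) = t₂.realize (Sum.elim p.tup p.par) ↔
        t₁.realize (Sum.elim q.tup q.par) = t₂.realize (Sum.elim q.tup q.par)
      rw [← relabel_realize_eq S p t₁ fun a ha => Set.mem_union_left _ ha,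
        ← relabel_realize_eq S p t₂ fun a ha => Set.mem_union_right _ ha,
        ← relabel_realize_eq S q t₁ fun a ha => Set.mem_union_left _ ha,
        ← relabel_realize_eq S q t₂ fun a ha => Set.mem_union_right _ ha]
      exact key
  | lrel R ts =>
      set S : Set A := {a | Sum.inr a ∈ ⋃ i, varsSet (ts i)} with hSdef
      have hfin : S.Finite := by
        have : S = Sum.inr ⁻¹' (⋃ i, varsSet (ts i)) := rfl
        rw [this]
        exact Set.Finite.preimage Sum.inr_injective.injOn
          (Set.finite_iUnion fun i => varsSet_finite (ts i))
      have hS : #↥S < κ := lt_of_lt_of_le hfin.lt_aleph0 hκ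
      have key := realize_of_gtp_eq (κ := κ) (hres S hS)
        (QF.lrel R fun i => (ts i).relabel (toSub S))
      have hfun : ∀ r : TypePt K PUnit.{u+1} A,
          (fun i => ((ts i).relabel (toSub S)).realize
              (Sum.elim r.tup fun a : ↥S => r.par a.1)) =
            fun i => (ts i).realize (Sum.elim r.tup r.par) := by
        intro r
        funext i
        exact relabel_realize_eq S r (ts i) fun a ha => Set.mem_iUnion.mpr ⟨i, ha⟩
      show FirstOrder.Language.Structure.RelMap R
          (fun i => (ts i).realize (Sum.elim p.tup p.par)) ↔
        FirstOrder.Language.Structure.RelMap R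
          (fun i => (ts i).realize (Sum.elim q.tup q.par))
      rw [← hfun p, ← hfun q]
      exact key
  | grel β hβ P v =>
      set S : Set A := {a | Sum.inr a ∈ Set.range v} with hSdef
      have hS : #↥S < κ := by
        have hch : ∀ a : ↥S, ∃ b, v b = Sum.inr a.1 := fun a => a.2
        choose f hf using hch
        have hinj : Function.Injective f := by
          intro a₁ a₂ hfa
          apply Subtype.ext
          have h1 := hf a₁
          rw [hfa, hf a₂] at h1
          exact (Sum.inr_injective h1).symm
        calc #↥S ≤ #β.ToType := Cardinal.mk_le_of_injective hinj
          _ = β.card := Cardinal.mk_toType β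
          _ < κ := Cardinal.lt_ord.mp hβ
      have hw : ∀ r : TypePt K PUnit.{u+1} A,
          (fun b => Sum.elim r.tup (fun a : ↥S => r.par a.1) (toSub S (v b))) =
            fun b => Sum.elim r.tup r.par (v b) := by
        intro r
        funext b
        cases hb : v b with
        | inl u => rfl
        | inr a =>
            have ha : a ∈ S := ⟨b, hb⟩
            have : toSub S (Sum.inr a) = Sum.inr ⟨a, ha⟩ := dif_pos ha
            show Sum.elim r.tup (fun a : ↥S => r.par a.1) (toSub S (Sum.inr a)) = r.par a
            rw [this]
            rfl
      have key := realize_of_gtp_eq (κ := κ) (hres S hS)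
        (QF.grel β hβ P (toSub S ∘ v))
      show gtp ⟨p.M, p.mem, PEmpty.elim, fun b => Sum.elim p.tup p.par (v b)⟩ = P ↔
        gtp ⟨q.M, q.mem, PEmpty.elim, fun b => Sum.elim q.tup q.par (v b)⟩ = P
      rw [← hw p, ← hw q]
      exact key
  | not φ ih => exact not_congr ih
  | conj J hJ f ih => exact forall_congr' ih

end Proof2


theorem stmt12 (L : FirstOrder.Language.{u, u}) (K : AEC L) (κ : Cardinal.{u})
    (hκ : ℵ₀ ≤ κ) :
    Tame K κ ↔
      ∀ (A : Type u) (M₀ : Mdl L), K.Mem M₀ → ∀ h₀ : A → M₀.Carrier,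
        ∀ p q : TypePt K PUnit.{u + 1} A,
          (∃ f : M₀.Carrier ↪[L] p.M.Carrier, K.IsStrong f ∧ ∀ a, f (h₀ a) = p.par a) →
          (∃ f : M₀.Carrier ↪[L] q.M.Carrier, K.IsStrong f ∧ ∀ a, f (h₀ a) = q.par a) →
          (gtp p = gtp q ↔ TypePt.stp κ p = TypePt.stp κ q) := by
  constructor
  · intro htame A M₀ hM₀ h₀ p q hp hq
    constructor
    · intro h
      exact Set.ext fun φ => realize_of_gtp_eq h φ
    · intro h
      by_contra hne
      obtain ⟨A₀, hA₀, hne'⟩ := htame A M₀ hM₀ h₀ (gtp p) (gtp q)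
        ⟨p, hp, rfl⟩ ⟨q, hq, rfl⟩ hne
      apply hne'
      have hres := restrict_gtp_eq_of_stp hκ p q h A₀ hA₀
      have e1 : GType.restrict A₀ (gtp p) = gtp (p.restrict A₀) := rfl
      have e2 : GType.restrict A₀ (gtp q) = gtp (q.restrict A₀) := rfl
      rw [e1, e2]
      exact hres
  · intro hiff A M₀ hM₀ h₀ P Q hP hQ hPQ
    obtain ⟨p, hp, rfl⟩ := hP
    obtain ⟨q, hq, rfl⟩ := hQ
    by_contra hcon
    push_neg at hcon
    apply hPQ
    apply (hiff A M₀ hM₀ h₀ p q hp hq).mpr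
    apply Set.ext
    intro φ
    exact realize_iff_of_restrict hκ p q
      (fun A₀ hA₀ => by
        have h := hcon A₀ hA₀
        have e1 : GType.restrict A₀ (gtp p) = gtp (p.restrict A₀) := rfl
        have e2 : GType.restrict A₀ (gtp q) = gtp (q.restrict A₀) := rfl
        rw [e1, e2] at h
        exact h) φ

end AECStmt
end
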